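/- A Boolean relation R ⊆ {0,1}^n is Horn (definable by a Horn CNF formula) if and only if R is closed under coordinate-wise conjunction: for all a, b ∈ R, the vector (a₁∧b₁, …, aₙ∧bₙ) is in R. -/

import Mathlib

/-- A clause is a list of literals (variable, polarity); polarity `true` = positive literal. -/
def SatClause {n : ℕ} (a : Fin n → Bool) (c : List (Fin n × Bool)) : Prop :=
  ∃ l ∈ c, (if l.2 then a l.1 else !(a l.1)) = true

/-- A Horn clause has at most one positive literal. -/
def IsHornClause {n : ℕ} (c : List (Fin n × Bool)) : Prop :=
  (c.filter (fun l => l.2)).length ≤ 1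

lemma mem_of_length_le_one {α : Type*} {l : List α} (h : l.length ≤ 1) {x y : α}
    (hx : x ∈ l) (hy : y ∈ l) : x = y := by
  match l with
  | [] => simp at hx
  | [a] => simp at hx hy; subst hx; subst hy; rfl
  | a :: b :: t => simp at h

open Classical in
/-- The pointwise infimum of all elements of `R` above `x`. -/
noncomputable def infAbove {n : ℕ} (R : Set (Fin n → Bool)) (x : Fin n → Bool) :
    Fin n → Bool :=
  fun j => (Finset.univ.filter (fun a => a ∈ R ∧ ∀ i, x i = true → a i = true)).inf
    (fun a => a j)

open Classical in
noncomputable def hornClauseFor {n : ℕ} (R : Set (Fin n → Bool)) (x : Fin n → Bool) :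
    List (Fin n × Bool) :=
  ((List.finRange n).filterMap (fun i => if x i then some (i, false) else none)) ++
    (((List.finRange n).find? (fun j => !x j && infAbove R x j)).toList.map (fun j => (j, true)))

lemma infAbove_mem {n : ℕ} {R : Set (Fin n → Bool)}
    (hcl : ∀ a ∈ R, ∀ b ∈ R, (fun i => a i && b i) ∈ R)
    (S : Finset (Fin n → Bool)) (hne : S.Nonempty) (hS : ∀ a ∈ S, a ∈ R) :
    (fun j => S.inf (fun a => a j)) ∈ R := by
  induction hne using Finset.Nonempty.cons_induction with
  | singleton a =>
      have : (fun j => Finset.inf {a} (fun a => a j)) = a := by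
        funext j; simp
      rw [this]; exact hS a (by simp)
  | cons a S h hne ih =>
      have ha : a ∈ R := hS a (Finset.mem_cons_self a S)
      have hm : (fun j => S.inf (fun a => a j)) ∈ R :=
        ih (fun b hb => hS b (Finset.mem_cons_of_mem hb))
      have := hcl a ha _ hm
      have heq : (fun i => a i && S.inf (fun b => b i)) =
          (fun j => (Finset.cons a S h).inf (fun b => b j)) := by
        funext j; simp [Finset.inf_cons]
      rwa [heq] at this

theorem horn_iff_closed_under_and (n : ℕ) (R : Set (Fin n → Bool)) :
    (∃ φ : List (List (Fin n × Bool)),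
        (∀ c ∈ φ, IsHornClause c) ∧
        R = {a | ∀ c ∈ φ, SatClause a c}) ↔
    (∀ a ∈ R, ∀ b ∈ R, (fun i => a i && b i) ∈ R) := by
  classical
  constructor
  · rintro ⟨φ, hHorn, rfl⟩ a ha b hb
    intro c hc
    obtain ⟨la, hla, hla2⟩ := ha c hc
    obtain ⟨lb, hlb, hlb2⟩ := hb c hc
    by_cases hpa : la.2
    · by_cases hpb : lb.2
      · have hmem_a : la ∈ c.filter (fun l => l.2) := by
          simp [List.mem_filter, hla, hpa]
        have hmem_b : lb ∈ c.filter (fun l => l.2) := by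
          simp [List.mem_filter, hlb, hpb]
        have : la = lb := mem_of_length_le_one (hHorn c hc) hmem_a hmem_b
        subst this
        refine ⟨la, hla, ?_⟩
        simp only [hpa, if_pos] at hla2 hlb2 ⊢
        simp [hla2, hlb2]
      · -- lb is negative: b lb.1 = false, so (a && b) lb.1 = false
        refine ⟨lb, hlb, ?_⟩
        simp only [Bool.not_eq_true] at hpb
        simp [hpb] at hlb2 ⊢
        simp [hlb2]
    · refine ⟨la, hla, ?_⟩
      simp only [Bool.not_eq_true] at hpa
      simp [hpa] at hla2 ⊢
      simp [hla2]
  · intro hcl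
    refine ⟨(Finset.univ : Finset (Fin n → Bool)).toList.filterMap
      (fun x => if x ∈ R then none else some (hornClauseFor R x)), ?_, ?_⟩
    -- key facts about hornClauseFor
    · -- Horn property
      intro c hc
      rw [List.mem_filterMap] at hc
      obtain ⟨x, -, hx⟩ := hc
      split_ifs at hx with hxR
      rw [Option.some_inj] at hx
      subst hx
      unfold IsHornClause hornClauseFor
      rw [List.filter_append, List.length_append]
      have h1 : (((List.finRange n).filterMap
          (fun i => if x i then some (i, (false : Bool)) else none)).filter
          (fun l => l.2)).length = 0 := by
        rw [List.length_eq_zero_iff, List.filter_eq_nil_iff]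
        intro l hl
        rw [List.mem_filterMap] at hl
        obtain ⟨i, -, hi⟩ := hl
        split_ifs at hi
        cases hi; simp
      rw [h1]
      simp only [Nat.zero_add]
      cases hfind : (List.finRange n).find? (fun j => !x j && infAbove R x j) with
      | none => simp
      | some j => simp
    · -- set equality
      ext a
      simp only [Set.mem_setOf_eq, List.mem_filterMap]
      constructor
      · -- a ∈ R satisfies all clauses
        intro haR c hc
        obtain ⟨x, -, hx⟩ := hc
        split_ifs at hx with hxR
        rw [Option.some_inj] at hx
        subst hx
        by_cases hge : ∀ i, x i = true → a i = true
        · -- a is above x, so a satisfies the positive literal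
          set S : Finset (Fin n → Bool) :=
            Finset.univ.filter (fun b => b ∈ R ∧ ∀ i, x i = true → b i = true) with hSdef
          have haS : a ∈ S := by
            simp only [hSdef, Finset.mem_filter, Finset.mem_univ, true_and]
            exact ⟨haR, hge⟩
          have hne : S.Nonempty := ⟨a, haS⟩
          have hSsub : ∀ b ∈ S, b ∈ R := by
            intro b hb; rw [hSdef, Finset.mem_filter] at hb; exact hb.2.1
          have hmR : (fun j => S.inf (fun b => b j)) ∈ R := infAbove_mem hcl S hne hSsub
          have hminf : infAbove R x = fun j => S.inf (fun b => b j) := by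
            unfold infAbove
            funext j
            congr 1
          have hmge : ∀ i, x i = true → infAbove R x i = true := by
            intro i hi
            rw [hminf]
            have : ∀ b ∈ S, b i = true := by
              intro b hb
              rw [hSdef, Finset.mem_filter] at hb
              exact hb.2.2 i hi
            exact (Finset.inf_eq_top_iff _ _).mpr this
          have hmne : infAbove R x ≠ x := by
            intro h
            rw [hminf] at h
            rw [h] at hmR
            exact hxR hmR
          have hexj : ∃ j, (!x j && infAbove R x j) = true := by
            by_contra hno
            push_neg at hno
            apply hmne
            funext j
            have := hno j
            simp only [Bool.and_eq_true, Bool.not_eq_true', Bool.and_eq_false_iff, Bool.not_eq_false', ne_eq, Bool.not_eq_true] at this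
            cases hxj : x j with
            | true => exact hmge j hxj
            | false => simp_all
          have hsome : ((List.finRange n).find? (fun j => !x j && infAbove R x j)).isSome := by
            rw [List.find?_isSome]
            obtain ⟨j, hj⟩ := hexj
            exact ⟨j, by simp, hj⟩
          obtain ⟨j, hj⟩ := Option.isSome_iff_exists.mp hsome
          have hpj := List.find?_some hj
          simp only [Bool.and_eq_true, Bool.not_eq_true'] at hpj
          refine ⟨(j, true), ?_, ?_⟩
          · unfold hornClauseFor
            rw [List.mem_append]
            right
            simp [hj]
          · have h2 : S.inf (fun b => b j) = true := by
              have := hpj.2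
              rw [hminf] at this
              exact this
            have hle : S.inf (fun b => b j) ≤ a j := Finset.inf_le haS
            rw [h2] at hle
            have haj : a j = true := top_le_iff.mp hle
            simp [haj]
        · push_neg at hge
          obtain ⟨i, hxi, hai⟩ := hge
          refine ⟨(i, false), ?_, ?_⟩
          · unfold hornClauseFor
            rw [List.mem_append]
            left
            rw [List.mem_filterMap]
            exact ⟨i, List.mem_finRange i, by simp [hxi]⟩
          · simp [hai]
      · -- contrapositive: a ∉ R fails its own clause
        intro hsat
        by_contra haR
        have hc : SatClause a (hornClauseFor R a) :=
          hsat _ ⟨a, by simp, by rw [if_neg haR]⟩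
        obtain ⟨l, hl, hl2⟩ := hc
        unfold hornClauseFor at hl
        rw [List.mem_append] at hl
        cases hl with
        | inl hl =>
            rw [List.mem_filterMap] at hl
            obtain ⟨i, -, hi⟩ := hl
            split_ifs at hi with hai
            cases hi
            simp [hai] at hl2
        | inr hl =>
            rw [List.mem_map] at hl
            obtain ⟨j, hj, rfl⟩ := hl
            rw [Option.mem_toList] at hj
            have := List.find?_some hj
            simp only [Bool.and_eq_true, Bool.not_eq_true'] at this
            simp [this.1] at hl2
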